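/- Let 𝒮 ⊂ ℝⁿ be a compact connected set of positive Lebesgue measure and T a probability density on 𝒮 that is continuous and L-Lipschitz with respect to the ℓ¹-norm for some L ≥ 0. Let (𝒫^{(m)})_{m∈ℕ} be a sequence of finite partitions of 𝒮 into hyperrectangles of positive Lebesgue measure (pairwise intersections of measure zero), with m-th partition having N_m cells and maximum side length δ̄_m, and let p^{(m)} be the discretization of T over 𝒫^{(m)}. If the maximum cell diameter tends to 0 and N_m δ̄_m^{n+1} → 0 as m → ∞, then KL_D(p^{(m)}‖p^{u,(m)}) + log(1 + (n/2) N_m L δ̄_m^{n+1}) → KL(T‖U) as m → ∞, and each term of this sequence is an upper bound on KL(T‖U). -/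

import Mathlib

open MeasureTheory Real Finset Filter

noncomputable section

private lemma cont_tlog {lam : ℝ} (hlam : lam ≠ 0) :
    Continuous (fun t : ℝ => t * Real.log (t * lam)) := by
  have h : (fun t : ℝ => t * Real.log (t * lam))
      = fun t => lam⁻¹ * ((t * lam) * Real.log (t * lam)) := by
    funext t; field_simp
  rw [h]
  exact continuous_const.mul (Real.continuous_mul_log.comp (continuous_id'.mul continuous_const))

private lemma cell_jensen_lower {n : ℕ} {a b : Fin n → ℝ}
    (hv : 0 < volume (Set.Icc a b))
    {T : (Fin n → ℝ) → ℝ} (hTc : ContinuousOn T (Set.Icc a b))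
    (hT0 : ∀ x ∈ Set.Icc a b, 0 ≤ T x)
    {lam : ℝ} (hlam : 0 < lam) :
    (∫ s in Set.Icc a b, T s) *
      Real.log ((∫ s in Set.Icc a b, T s) * lam / (volume (Set.Icc a b)).toReal)
      ≤ ∫ s in Set.Icc a b, T s * Real.log (T s * lam) := by
  set C : Set (Fin n → ℝ) := Set.Icc a b with hC
  have hmeas : MeasurableSet C := measurableSet_Icc
  have hfin : volume C < ⊤ := isCompact_Icc.measure_lt_top
  set p : ℝ := ∫ s in C, T s with hp_def
  set v : ℝ := (volume C).toReal with hv_def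
  have hv' : 0 < v := ENNReal.toReal_pos hv.ne' hfin.ne
  have hTint : IntegrableOn T C := hTc.integrableOn_compact isCompact_Icc
  have hTlogT : IntegrableOn (fun s => T s * Real.log (T s)) C :=
    (Real.continuous_mul_log.comp_continuousOn hTc).integrableOn_compact isCompact_Icc
  have hpnn : 0 ≤ p := setIntegral_nonneg hmeas hT0
  have hT0ae : ∀ᵐ x ∂(volume.restrict C), 0 ≤ T x :=
    (ae_restrict_mem hmeas).mono fun x hx => hT0 x hx
  rcases eq_or_lt_of_le hpnn with hp0 | hppos
  · have hT0' : T =ᶠ[ae (volume.restrict C)] 0 :=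
      (integral_eq_zero_iff_of_nonneg_ae hT0ae hTint).mp hp0.symm
    have hR : (∫ s in C, T s * Real.log (T s * lam)) = 0 := by
      rw [← integral_zero (Fin n → ℝ) ℝ (μ := volume.restrict C)]
      exact integral_congr_ae (hT0'.mono fun s hs => by simp [hs])
    rw [← hp0, hR]; simp
  · haveI : IsFiniteMeasure (volume.restrict C) :=
      ⟨by rw [Measure.restrict_apply_univ]; exact hfin⟩
    haveI : NeZero (volume.restrict C) :=
      ⟨by rw [Ne, Measure.restrict_eq_zero]; exact hv.ne'⟩
    have jensen := Real.convexOn_mul_log.map_average_le Real.continuous_mul_log.continuousOn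
      isClosed_Ici (hT0ae.mono fun x hx => hx) hTint hTlogT
    rw [average_eq, average_eq] at jensen
    rw [measureReal_def, Measure.restrict_apply_univ] at jensen
    have key : p * Real.log (p / v) ≤ ∫ s in C, T s * Real.log (T s) := by
      have h2 : (v⁻¹ * p) * Real.log (v⁻¹ * p) ≤ v⁻¹ * ∫ s in C, T s * Real.log (T s) := by
        simpa [smul_eq_mul, hv_def, Function.comp] using jensen
      have h3 : v⁻¹ * p = p / v := by ring
      rw [h3] at h2
      calc p * Real.log (p / v) = v * ((p / v) * Real.log (p / v)) := by field_simp
        _ ≤ v * (v⁻¹ * ∫ s in C, T s * Real.log (T s)) := by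
            apply mul_le_mul_of_nonneg_left h2 hv'.le
        _ = ∫ s in C, T s * Real.log (T s) := by field_simp
    have hRHS : (∫ s in C, T s * Real.log (T s * lam))
        = (∫ s in C, T s * Real.log (T s)) + p * Real.log lam := by
      have heq : Set.EqOn (fun s => T s * Real.log (T s * lam))
          (fun s => T s * Real.log (T s) + T s * Real.log lam) C := by
        intro s hs
        rcases eq_or_lt_of_le (hT0 s hs) with h0 | h0
        · simp [← h0]
        · simp only []
          rw [Real.log_mul h0.ne' hlam.ne']; ring
      rw [setIntegral_congr_fun hmeas heq, integral_add hTlogT (hTint.mul_const _),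
        integral_mul_const]
    have hLHS : p * Real.log (p * lam / v) = p * Real.log (p / v) + p * Real.log lam := by
      have : p * lam / v = (p / v) * lam := by ring
      rw [this, Real.log_mul (by positivity) hlam.ne']; ring
    rw [hLHS, hRHS]
    linarith

private lemma cell_upper {n : ℕ} {a b : Fin n → ℝ}
    {T : (Fin n → ℝ) → ℝ} (hTc : ContinuousOn T (Set.Icc a b))
    (hT0 : ∀ x ∈ Set.Icc a b, 0 ≤ T x)
    {lam M : ℝ} (hlam : 0 < lam) (hM : ∀ x ∈ Set.Icc a b, T x ≤ M) :
    (∫ s in Set.Icc a b, T s * Real.log (T s * lam))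
      ≤ (∫ s in Set.Icc a b, T s) * Real.log (M * lam) := by
  have hmeas : MeasurableSet (Set.Icc a b) := measurableSet_Icc
  have hTint : IntegrableOn T (Set.Icc a b) := hTc.integrableOn_compact isCompact_Icc
  have h1 : IntegrableOn (fun s => T s * Real.log (T s * lam)) (Set.Icc a b) :=
    ((cont_tlog hlam.ne').comp_continuousOn hTc).integrableOn_compact isCompact_Icc
  have h2 : IntegrableOn (fun s => T s * Real.log (M * lam)) (Set.Icc a b) :=
    hTint.mul_const _
  rw [← integral_mul_const]
  apply setIntegral_mono_on h1 h2 hmeas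
  intro x hx
  rcases eq_or_lt_of_le (hT0 x hx) with h0 | h0
  · simp [← h0]
  · exact mul_le_mul_of_nonneg_left
      (Real.log_le_log (by positivity) (mul_le_mul_of_nonneg_right (hM x hx) hlam.le)) h0.le

private lemma cell_sup {n : ℕ} {𝒮 : Set (Fin n → ℝ)} {a b : Fin n → ℝ}
    (hsub : Set.Icc a b ⊆ 𝒮)
    (hv : 0 < volume (Set.Icc a b))
    {T : (Fin n → ℝ) → ℝ} (hTc : ContinuousOn T 𝒮)
    {L : ℝ} (hL : 0 ≤ L)
    (hTLip : ∀ x ∈ 𝒮, ∀ y ∈ 𝒮, |T x - T y| ≤ L * ∑ j : Fin n, |x j - y j|)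
    {x : Fin n → ℝ} (hx : x ∈ Set.Icc a b) :
    T x ≤ (∫ s in Set.Icc a b, T s) / (volume (Set.Icc a b)).toReal
        + L / 2 * ∑ j : Fin n, (b j - a j) := by
  classical
  set C : Set (Fin n → ℝ) := Set.Icc a b with hC
  have hmeas : MeasurableSet C := measurableSet_Icc
  have hfin : volume C < ⊤ := isCompact_Icc.measure_lt_top
  set p : ℝ := ∫ s in C, T s with hp_def
  set v : ℝ := (volume C).toReal with hv_def
  have hv' : 0 < v := ENNReal.toReal_pos hv.ne' hfin.ne
  have hTcC : ContinuousOn T C := hTc.mono hsub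
  have hreflmem : ∀ y ∈ C, a + b - y ∈ C := by
    intro y hy
    rw [hC, Set.mem_Icc] at hy ⊢
    obtain ⟨h1, h2⟩ := hy
    constructor <;> intro j <;>
      simp only [Pi.add_apply, Pi.sub_apply] <;> [linarith [h1 j, h2 j]; linarith [h1 j, h2 j]]
  have hTrefl : ContinuousOn (fun y => T (a + b - y)) C := by
    apply hTcC.comp ((continuous_const.sub continuous_id').continuousOn)
    intro y hy; exact hreflmem y hy
  have hTint : IntegrableOn T C := hTcC.integrableOn_compact isCompact_Icc
  have hTreflint : IntegrableOn (fun y => T (a + b - y)) C :=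
    hTrefl.integrableOn_compact isCompact_Icc
  set S : ℝ := ∑ j : Fin n, (b j - a j) with hS_def
  have hpt : ∀ y ∈ C, T x ≤ (T y + T (a + b - y)) / 2 + L / 2 * S := by
    intro y hy
    have hx𝒮 : x ∈ 𝒮 := hsub hx
    have hy𝒮 : y ∈ 𝒮 := hsub hy
    have hr𝒮 : a + b - y ∈ 𝒮 := hsub (hreflmem y hy)
    have h1 : T x - T y ≤ L * ∑ j : Fin n, |x j - y j| :=
      (le_abs_self _).trans (hTLip x hx𝒮 y hy𝒮)
    have h2 : T x - T (a + b - y) ≤ L * ∑ j : Fin n, |x j - (a + b - y) j| :=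
      (le_abs_self _).trans (hTLip x hx𝒮 _ hr𝒮)
    have hpair : (∑ j : Fin n, |x j - y j|) + (∑ j : Fin n, |x j - (a + b - y) j|) ≤ S := by
      rw [← Finset.sum_add_distrib]
      apply Finset.sum_le_sum
      intro j _
      simp only [Pi.add_apply, Pi.sub_apply]
      rcases abs_cases (x j - y j) with ⟨e1, _⟩ | ⟨e1, _⟩ <;>
        rcases abs_cases (x j - (a j + b j - y j)) with ⟨e2, _⟩ | ⟨e2, _⟩ <;>
        [skip; skip; skip; skip] <;>
        · have hxj1 := hx.1 j; have hxj2 := hx.2 j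
          have hyj1 := hy.1 j; have hyj2 := hy.2 j
          linarith
    nlinarith [mul_le_mul_of_nonneg_left hpair hL]
  have hconst : IntegrableOn (fun _ : Fin n → ℝ => L / 2 * S) C :=
    integrableOn_const hfin.ne
  have hhalf : IntegrableOn (fun y => (T y + T (a + b - y)) / 2) C :=
    (hTint.add hTreflint).div_const 2
  have hgint : IntegrableOn (fun y => (T y + T (a + b - y)) / 2 + L / 2 * S) C :=
    hhalf.add hconst
  have hmono := setIntegral_mono_on (integrableOn_const hfin.ne) hgint hmeas hpt
  rw [setIntegral_const] at hmono
  have hre : ∫ y in C, T (a + b - y) = p := by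
    have h := MeasurePreserving.setIntegral_image_emb
      (Measure.measurePreserving_sub_left (volume : Measure (Fin n → ℝ)) (a + b))
      (MeasurableEquiv.subLeft (a + b)).measurableEmbedding T C
    have himg : (fun y : Fin n → ℝ => a + b - y) '' C = C := by
      apply Set.Subset.antisymm
      · rintro _ ⟨y, hy, rfl⟩; exact hreflmem y hy
      · intro z hz; exact ⟨a + b - z, hreflmem z hz, sub_sub_cancel _ _⟩
    rw [himg] at h
    exact h.symm
  have hint_eval : ∫ y in C, ((T y + T (a + b - y)) / 2 + L / 2 * S)
      = p + v * (L / 2 * S) := by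
    rw [integral_add hhalf hconst, integral_div, integral_add hTint hTreflint, hre,
      setIntegral_const]
    simp only [smul_eq_mul, ← hp_def, measureReal_def, ← hv_def]
    ring
  rw [hint_eval] at hmono
  have hkey : v * T x ≤ p + v * (L / 2 * S) := by
    simpa [smul_eq_mul, measureReal_def, hv_def] using hmono
  rw [div_add' _ _ _ hv'.ne', le_div_iff₀ hv']
  nlinarith

/-- convergent upper bounds: along a sequence of hyperrectangular
partitions with vanishing mesh and `N_m δ̄_m^{n+1} → 0`, the globally-corrected discrete
KL divergence to uniform converges to `KL(T‖U)` from above. -/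
theorem corrected_discretized_kl_tendsto_and_upper_bounds
    (n : ℕ)
    (𝒮 : Set (Fin n → ℝ))
    (hcomp : IsCompact 𝒮) (hconn : IsConnected 𝒮) (hpos : 0 < volume 𝒮)
    (T : (Fin n → ℝ) → ℝ)
    (hTcont : ContinuousOn T 𝒮)
    (hTnonneg : ∀ s ∈ 𝒮, 0 ≤ T s)
    (hTint : (∫ s in 𝒮, T s) = 1)
    (L : ℝ) (hL : 0 ≤ L)
    (hTLip : ∀ x ∈ 𝒮, ∀ y ∈ 𝒮, |T x - T y| ≤ L * ∑ j : Fin n, |x j - y j|)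
    -- the sequence of hyperrectangular partitions
    (N : ℕ → ℕ)
    (cell : (m : ℕ) → Fin (N m) → Set (Fin n → ℝ))
    (α β : (m : ℕ) → Fin (N m) → Fin n → ℝ)
    (hrect : ∀ m i, cell m i = Set.Icc (α m i) (β m i))
    (hcellpos : ∀ m i, 0 < volume (cell m i))
    (hcover : ∀ m, (⋃ i, cell m i) = 𝒮)
    (hdisj : ∀ m, ∀ i j : Fin (N m), i ≠ j → volume (cell m i ∩ cell m j) = 0)
    -- maximum side lengths δ̄_m
    (δbar : ℕ → ℝ)
    (hδbar₁ : ∀ m i j, β m i j - α m i j ≤ δbar m)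
    (hδbar₂ : ∀ m, ∃ i j, β m i j - α m i j = δbar m)
    -- maximum cell diameter tends to 0 and N_m δ̄_m^{n+1} → 0
    (hmesh : Tendsto (fun m => ⨆ i : Fin (N m), EMetric.diam (cell m i)) atTop (nhds 0))
    (hNδ : Tendsto (fun m => (N m : ℝ) * δbar m ^ (n + 1)) atTop (nhds 0)) :
    Tendsto
      (fun m => (∑ i : Fin (N m),
          (∫ s in cell m i, T s) *
            Real.log ((∫ s in cell m i, T s) * (volume 𝒮).toReal / (volume (cell m i)).toReal))
        + Real.log (1 + (n : ℝ) / 2 * (N m : ℝ) * L * δbar m ^ (n + 1)))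
      atTop
      (nhds (∫ s in 𝒮, T s * Real.log (T s * (volume 𝒮).toReal)))
    ∧ ∀ m : ℕ,
      (∫ s in 𝒮, T s * Real.log (T s * (volume 𝒮).toReal))
        ≤ (∑ i : Fin (N m),
            (∫ s in cell m i, T s) *
              Real.log ((∫ s in cell m i, T s) * (volume 𝒮).toReal / (volume (cell m i)).toReal))
          + Real.log (1 + (n : ℝ) / 2 * (N m : ℝ) * L * δbar m ^ (n + 1)) := by
  classical
  simp only [hrect] at hcellpos hcover hdisj ⊢
  have hSmeas : MeasurableSet 𝒮 := hcomp.isClosed.measurableSet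
  have hSfin : volume 𝒮 < ⊤ := hcomp.measure_lt_top
  have hlam : 0 < (volume 𝒮).toReal := ENNReal.toReal_pos hpos.ne' hSfin.ne
  set lam : ℝ := (volume 𝒮).toReal with hlam_def
  have hTintS : IntegrableOn T 𝒮 := hTcont.integrableOn_compact hcomp
  have hKLint : IntegrableOn (fun s => T s * Real.log (T s * lam)) 𝒮 :=
    ((cont_tlog hlam.ne').comp_continuousOn hTcont).integrableOn_compact hcomp
  have hab : ∀ m i, α m i ≤ β m i := by
    intro m i
    exact Set.nonempty_Icc.mp (nonempty_of_measure_ne_zero (hcellpos m i).ne')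
  have hδ0 : ∀ m, 0 ≤ δbar m := by
    intro m
    obtain ⟨i, j, hij⟩ := hδbar₂ m
    rw [← hij]
    exact sub_nonneg.2 (Pi.le_def.mp (hab m i) j)
  have key : ∀ m,
      ((∑ i : Fin (N m), (∫ s in Set.Icc (α m i) (β m i), T s) *
          Real.log ((∫ s in Set.Icc (α m i) (β m i), T s) * lam /
            (volume (Set.Icc (α m i) (β m i))).toReal))
        ≤ (∫ s in 𝒮, T s * Real.log (T s * lam)))
      ∧ (∫ s in 𝒮, T s * Real.log (T s * lam))
        ≤ (∑ i : Fin (N m), (∫ s in Set.Icc (α m i) (β m i), T s) *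
            Real.log ((∫ s in Set.Icc (α m i) (β m i), T s) * lam /
              (volume (Set.Icc (α m i) (β m i))).toReal))
          + Real.log (1 + (n : ℝ) / 2 * (N m : ℝ) * L * δbar m ^ (n + 1)) := by
    intro m
    have hsub : ∀ i, Set.Icc (α m i) (β m i) ⊆ 𝒮 := by
      intro i
      rw [← hcover m]
      exact Set.subset_iUnion (fun k => Set.Icc (α m k) (β m k)) i
    have hmeasC : ∀ i : Fin (N m), MeasurableSet (Set.Icc (α m i) (β m i)) :=
      fun i => measurableSet_Icc
    have hdecomp : ∀ f : (Fin n → ℝ) → ℝ, IntegrableOn f 𝒮 →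
        ∫ s in 𝒮, f s = ∑ i : Fin (N m), ∫ s in Set.Icc (α m i) (β m i), f s := by
      intro f hf
      rw [← hcover m] at hf ⊢
      rw [integral_iUnion_ae (fun i => (hmeasC i).nullMeasurableSet)
        (fun i j hij => hdisj m i j hij) hf, tsum_fintype]
    set p : Fin (N m) → ℝ := fun i => ∫ s in Set.Icc (α m i) (β m i), T s with hp_def
    set v : Fin (N m) → ℝ := fun i => (volume (Set.Icc (α m i) (β m i))).toReal with hv_def
    have hpnn : ∀ i, 0 ≤ p i := fun i =>
      setIntegral_nonneg (hmeasC i) fun x hx => hTnonneg x (hsub i hx)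
    have hvpos : ∀ i, 0 < v i := fun i =>
      ENNReal.toReal_pos (hcellpos m i).ne' (isCompact_Icc.measure_lt_top).ne
    have hsum1 : ∑ i, p i = 1 := by rw [← hdecomp T hTintS, hTint]
    set e : ℝ := L / 2 * ((n : ℝ) * δbar m) with he_def
    have he0 : 0 ≤ e := by
      have := hδ0 m
      positivity
    set M : Fin (N m) → ℝ := fun i => p i / v i + e with hM_def
    have hvle : ∀ i, v i ≤ δbar m ^ n := by
      intro i
      rw [hv_def]
      simp only []
      rw [Real.volume_Icc_pi_toReal (hab m i)]
      calc (∏ j : Fin n, (β m i j - α m i j)) ≤ ∏ _j : Fin n, δbar m :=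
            Finset.prod_le_prod (fun j _ => sub_nonneg.2 (Pi.le_def.mp (hab m i) j))
              (fun j _ => hδbar₁ m i j)
        _ = δbar m ^ n := by
            rw [Finset.prod_const, Finset.card_univ, Fintype.card_fin]
    -- lower bound: discretized KL ≤ KL
    have hlower : (∑ i : Fin (N m), p i * Real.log (p i * lam / v i))
        ≤ ∫ s in 𝒮, T s * Real.log (T s * lam) := by
      rw [hdecomp _ hKLint]
      apply Finset.sum_le_sum
      intro i _
      exact cell_jensen_lower (hcellpos m i) (hTcont.mono (hsub i))
        (fun x hx => hTnonneg x (hsub i hx)) hlam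
    -- upper bound step 1 : KL ≤ Σ pᵢ log (Mᵢ lam)
    have hupper1 : (∫ s in 𝒮, T s * Real.log (T s * lam))
        ≤ ∑ i : Fin (N m), p i * Real.log (M i * lam) := by
      rw [hdecomp _ hKLint]
      apply Finset.sum_le_sum
      intro i _
      apply cell_upper (hTcont.mono (hsub i)) (fun x hx => hTnonneg x (hsub i hx)) hlam
      intro x hx
      have h1 := cell_sup (hsub i) (hcellpos m i) hTcont hL hTLip hx
      have h2 : L / 2 * ∑ j : Fin n, (β m i j - α m i j) ≤ e := by
        rw [he_def]
        apply mul_le_mul_of_nonneg_left _ (by positivity : (0:ℝ) ≤ L / 2)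
        calc (∑ j : Fin n, (β m i j - α m i j)) ≤ ∑ _j : Fin n, δbar m :=
              Finset.sum_le_sum fun j _ => hδbar₁ m i j
          _ = (n : ℝ) * δbar m := by
              rw [Finset.sum_const, Finset.card_univ, Fintype.card_fin, nsmul_eq_mul]
      calc T x ≤ (∫ s in Set.Icc (α m i) (β m i), T s) /
              (volume (Set.Icc (α m i) (β m i))).toReal
            + L / 2 * ∑ j : Fin n, (β m i j - α m i j) := h1
        _ ≤ M i := by
            rw [hM_def]
            simp only []
            exact add_le_add_right h2 _
    -- upper bound step 2 : Σ pᵢ log (Mᵢ lam) ≤ Σ pᵢ log (pᵢ lam / vᵢ) + log (1 + ε)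
    set ε : ℝ := (n : ℝ) / 2 * (N m : ℝ) * L * δbar m ^ (n + 1) with hε_def
    set z : Fin (N m) → ℝ := fun i => if p i = 0 then 1 else 1 + e * v i / p i with hz_def
    have hz1 : ∀ i, 1 ≤ z i := by
      intro i
      rw [hz_def]
      simp only []
      by_cases h : p i = 0
      · simp [h]
      · rw [if_neg h]
        have hppos : 0 < p i := (hpnn i).lt_of_ne (Ne.symm h)
        have : 0 ≤ e * v i / p i := by positivity
        linarith
    have hstep1 : ∀ i, p i * Real.log (M i * lam)
        = p i * Real.log (p i * lam / v i) + p i * Real.log (z i) := by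
      intro i
      by_cases h : p i = 0
      · simp [h]
      · have hppos : 0 < p i := (hpnn i).lt_of_ne (Ne.symm h)
        have hzval : z i = 1 + e * v i / p i := if_neg h
        have hzpos : 0 < z i := lt_of_lt_of_le one_pos (hz1 i)
        have hvne : v i ≠ 0 := (hvpos i).ne'
        have hpne : p i ≠ 0 := hppos.ne'
        have hfact : M i * lam = (p i * lam / v i) * z i := by
          rw [hzval, hM_def]
          simp only []
          field_simp
        rw [hfact, Real.log_mul (div_pos (mul_pos hppos hlam) (hvpos i)).ne' hzpos.ne']
        ring
    have hsum_eq : (∑ i : Fin (N m), p i * Real.log (M i * lam))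
        = (∑ i : Fin (N m), p i * Real.log (p i * lam / v i))
          + ∑ i : Fin (N m), p i * Real.log (z i) := by
      rw [← Finset.sum_add_distrib]
      exact Finset.sum_congr rfl fun i _ => hstep1 i
    have hjensen : (∑ i : Fin (N m), p i * Real.log (z i))
        ≤ Real.log (∑ i : Fin (N m), p i * z i) := by
      have h := strictConcaveOn_log_Ioi.concaveOn.le_map_sum (t := Finset.univ)
        (w := p) (p := z) (fun i _ => hpnn i) hsum1
        (fun i _ => lt_of_lt_of_le one_pos (hz1 i))
      simpa [smul_eq_mul] using h
    have hzsum_le : (∑ i : Fin (N m), p i * z i) ≤ 1 + ε := by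
      have h1 : ∀ i, p i * z i ≤ p i + e * v i := by
        intro i
        by_cases h : p i = 0
        · simp only [h, zero_mul, zero_add]
          exact mul_nonneg he0 (hvpos i).le
        · have hppos : 0 < p i := (hpnn i).lt_of_ne (Ne.symm h)
          have hzval : z i = 1 + e * v i / p i := if_neg h
          rw [hzval]
          have : p i * (e * v i / p i) = e * v i := by field_simp
          rw [mul_add, mul_one, this]
      have hvsum : (∑ i : Fin (N m), v i) ≤ (N m : ℝ) * δbar m ^ n := by
        calc (∑ i : Fin (N m), v i) ≤ ∑ _i : Fin (N m), δbar m ^ n :=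
              Finset.sum_le_sum fun i _ => hvle i
          _ = (N m : ℝ) * δbar m ^ n := by
              rw [Finset.sum_const, Finset.card_univ, Fintype.card_fin, nsmul_eq_mul]
      calc (∑ i : Fin (N m), p i * z i) ≤ ∑ i : Fin (N m), (p i + e * v i) :=
            Finset.sum_le_sum fun i _ => h1 i
        _ = 1 + e * ∑ i : Fin (N m), v i := by
            rw [Finset.sum_add_distrib, hsum1, ← Finset.mul_sum]
        _ ≤ 1 + e * ((N m : ℝ) * δbar m ^ n) := by
            have := mul_le_mul_of_nonneg_left hvsum he0
            linarith
        _ = 1 + ε := by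
            rw [he_def, hε_def]
            ring
    have hzsum_pos : (0:ℝ) < ∑ i : Fin (N m), p i * z i := by
      have h1 : (1:ℝ) ≤ ∑ i : Fin (N m), p i * z i := by
        rw [← hsum1]
        apply Finset.sum_le_sum
        intro i _
        nth_rewrite 1 [← mul_one (p i)]
        exact mul_le_mul_of_nonneg_left (hz1 i) (hpnn i)
      linarith
    have hupper2 : (∑ i : Fin (N m), p i * Real.log (M i * lam))
        ≤ (∑ i : Fin (N m), p i * Real.log (p i * lam / v i)) + Real.log (1 + ε) := by
      rw [hsum_eq]
      have hlog := Real.log_le_log hzsum_pos hzsum_le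
      linarith [hjensen.trans hlog]
    constructor
    · simpa only [hp_def, hv_def] using hlower
    · have := hupper1.trans hupper2
      simpa only [hp_def, hv_def, hε_def] using this
  constructor
  · -- convergence by squeezing
    have hεt : Tendsto (fun m => (n : ℝ) / 2 * (N m : ℝ) * L * δbar m ^ (n + 1))
        atTop (nhds 0) := by
      have heq : (fun m => (n : ℝ) / 2 * (N m : ℝ) * L * δbar m ^ (n + 1))
          = fun m => ((n : ℝ) / 2 * L) * ((N m : ℝ) * δbar m ^ (n + 1)) :=
        funext fun m => by ring
      rw [heq]
      simpa using hNδ.const_mul ((n : ℝ) / 2 * L)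
    have hlog0 : Tendsto
        (fun m => Real.log (1 + (n : ℝ) / 2 * (N m : ℝ) * L * δbar m ^ (n + 1)))
        atTop (nhds 0) := by
      have h1 : Tendsto (fun m => 1 + (n : ℝ) / 2 * (N m : ℝ) * L * δbar m ^ (n + 1))
          atTop (nhds 1) := by
        simpa using tendsto_const_nhds.add hεt
      have h2 := ((Real.continuousAt_log (by norm_num : (1:ℝ) ≠ 0)).tendsto).comp h1
      simpa [Function.comp_def, Real.log_one] using h2
    apply tendsto_of_tendsto_of_tendsto_of_le_of_le
      (g := fun _ => ∫ s in 𝒮, T s * Real.log (T s * lam))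
      (h := fun m => (∫ s in 𝒮, T s * Real.log (T s * lam))
        + Real.log (1 + (n : ℝ) / 2 * (N m : ℝ) * L * δbar m ^ (n + 1)))
      tendsto_const_nhds
      (by simpa using tendsto_const_nhds.add hlog0)
      (fun m => (key m).2)
      (fun m => add_le_add_left (key m).1 _)
  · exact fun m => (key m).2
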